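/- Let n ≥ 3 be odd and let L be an order-n Latin square. Then L has inner distance (n−1)/2 if and only if there exist s ∈ ZMod n and r, c ∈ ZMod n with r, c ∈ {(n−1)/2 mod n, (n+1)/2 mod n} such that L(i,j) = s + r·i + c·j for all i, j (where i, j are interpreted in ZMod n). -/
import Mathlib


/-- Distance between two symbols of `ZMod n`: the minimum of the two cyclic differences. -/
def zdist {n : ℕ} (a b : ZMod n) : ℕ := min (a - b).val (b - a).val

/-- An order-`n` Latin square: every row and every column is injective. -/
def IsLatin (n : ℕ) (L : Fin n → Fin n → ZMod n) : Prop :=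
  (∀ i, Function.Injective (L i)) ∧ ∀ j, Function.Injective fun i => L i j

/-- The inner distance of a square: the minimum of `zdist` over all pairs of
horizontally or vertically adjacent cells. -/
noncomputable def innerDist (n : ℕ) (L : Fin n → Fin n → ZMod n) : ℕ :=
  sInf { d : ℕ |
    (∃ i : Fin n, ∃ j : ℕ, ∃ hj : j + 1 < n,
      d = zdist (L i ⟨j, Nat.lt_of_succ_lt hj⟩) (L i ⟨j + 1, hj⟩)) ∨
    (∃ j : Fin n, ∃ i : ℕ, ∃ hi : i + 1 < n,
      d = zdist (L ⟨i, Nat.lt_of_succ_lt hi⟩ j) (L ⟨i + 1, hi⟩ j)) }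

lemma zdist_comm {n : ℕ} (a b : ZMod n) : zdist a b = zdist b a := by
  unfold zdist; exact Nat.min_comm _ _

lemma zdist_le_half {n : ℕ} (hn : 3 ≤ n) (ho : Odd n) (a b : ZMod n) :
    zdist a b ≤ (n - 1) / 2 := by
  haveI : NeZero n := ⟨by omega⟩
  obtain ⟨m, hm⟩ := ho
  rcases eq_or_ne a b with h | h
  · simp [zdist, h]
  · have h1 : a - b ≠ 0 := sub_ne_zero.mpr h
    have h2 : (b - a) = -(a - b) := by ring
    have h3 : (b - a).val = n - (a - b).val := by
      rw [h2, ZMod.neg_val]; simp [h1]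
    have h4 : (a - b).val < n := ZMod.val_lt _
    have h5 : (a - b).val ≠ 0 := fun h0 => h1 ((ZMod.val_eq_zero _).mp h0)
    unfold zdist
    omega

lemma zdist_add_half {n : ℕ} (hn : 3 ≤ n) (ho : Odd n) (a : ZMod n) :
    zdist a (a + (((n - 1) / 2 : ℕ) : ZMod n)) = (n - 1) / 2 := by
  haveI : NeZero n := ⟨by omega⟩
  obtain ⟨m, hm⟩ := ho
  set k : ℕ := (n - 1) / 2 with hk
  have hkn : k < n := by omega
  have hval : ((k : ℕ) : ZMod n).val = k := ZMod.val_cast_of_lt hkn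
  have hne : ((k : ℕ) : ZMod n) ≠ 0 := by
    intro h0; rw [h0, ZMod.val_zero] at hval; omega
  have h1 : a + ((k : ℕ) : ZMod n) - a = ((k : ℕ) : ZMod n) := by ring
  have h2 : a - (a + ((k : ℕ) : ZMod n)) = -((k : ℕ) : ZMod n) := by ring
  unfold zdist
  rw [h1, h2, ZMod.neg_val]
  simp only [hne, if_false, hval]
  omega

lemma zdist_eq_half_imp {n : ℕ} (hn : 3 ≤ n) (ho : Odd n) (a b : ZMod n)
    (h : zdist a b = (n - 1) / 2) :
    a - b = (((n - 1) / 2 : ℕ) : ZMod n) ∨ b - a = (((n - 1) / 2 : ℕ) : ZMod n) := by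
  haveI : NeZero n := ⟨by omega⟩
  set k : ℕ := (n - 1) / 2 with hk
  have hkn : k < n := by omega
  have hval : ((k : ℕ) : ZMod n).val = k := ZMod.val_cast_of_lt hkn
  unfold zdist at h
  rcases le_total (a - b).val (b - a).val with hle | hle
  · left
    have : (a - b).val = k := by omega
    exact ZMod.val_injective n (by rw [this, hval])
  · right
    have : (b - a).val = k := by omega
    exact ZMod.val_injective n (by rw [this, hval])

set_option maxHeartbeats 2000000 in
theorem stmt2 (n : ℕ) (hn : 3 ≤ n) (ho : Odd n) (L : Fin n → Fin n → ZMod n)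
    (hL : IsLatin n L) :
    innerDist n L = (n - 1) / 2 ↔
      ∃ s r c : ZMod n,
        (r = (((n - 1) / 2 : ℕ) : ZMod n) ∨ r = (((n + 1) / 2 : ℕ) : ZMod n)) ∧
        (c = (((n - 1) / 2 : ℕ) : ZMod n) ∨ c = (((n + 1) / 2 : ℕ) : ZMod n)) ∧
        ∀ i j : Fin n, L i j = s + r * ((i : ℕ) : ZMod n) + c * ((j : ℕ) : ZMod n) := by
  haveI : NeZero n := ⟨by omega⟩
  obtain ⟨m, hm⟩ := id ho
  set k : ℕ := (n - 1) / 2 with hkdef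
  have hkn : k < n := by omega
  have hneg : (((n + 1) / 2 : ℕ) : ZMod n) = -((k : ℕ) : ZMod n) := by
    have hs : (k : ℕ) + (n + 1) / 2 = n := by omega
    have h0 : (((k + (n + 1) / 2 : ℕ)) : ZMod n) = 0 := by
      rw [hs]; exact ZMod.natCast_self n
    push_cast at h0
    linear_combination h0
  unfold innerDist
  constructor
  · intro hID
    have hub : ∀ d ∈ { d : ℕ |
        (∃ i : Fin n, ∃ j : ℕ, ∃ hj : j + 1 < n,
          d = zdist (L i ⟨j, Nat.lt_of_succ_lt hj⟩) (L i ⟨j + 1, hj⟩)) ∨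
        (∃ j : Fin n, ∃ i : ℕ, ∃ hi : i + 1 < n,
          d = zdist (L ⟨i, Nat.lt_of_succ_lt hi⟩ j) (L ⟨i + 1, hi⟩ j)) }, d = k := by
      intro d hd
      have hge : k ≤ d := by
        have h := Nat.sInf_le hd
        rw [hID] at h
        exact h
      have hle : d ≤ k := by
        rcases hd with ⟨i, j, hj, rfl⟩ | ⟨j, i, hi, rfl⟩ <;>
          exact zdist_le_half hn ho _ _
      omega
    have H : ∀ (i : Fin n) (j : ℕ) (hj : j + 1 < n),
        L i ⟨j + 1, hj⟩ - L i ⟨j, by omega⟩ = ((k : ℕ) : ZMod n) ∨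
        L i ⟨j + 1, hj⟩ - L i ⟨j, by omega⟩ = -((k : ℕ) : ZMod n) := by
      intro i j hj
      have hmem := hub _ (Or.inl ⟨i, j, hj, rfl⟩)
      rcases zdist_eq_half_imp hn ho _ _ hmem with h | h
      · right; linear_combination -h
      · left; exact h
    have V : ∀ (j : Fin n) (i : ℕ) (hi : i + 1 < n),
        L ⟨i + 1, hi⟩ j - L ⟨i, by omega⟩ j = ((k : ℕ) : ZMod n) ∨
        L ⟨i + 1, hi⟩ j - L ⟨i, by omega⟩ j = -((k : ℕ) : ZMod n) := by
      intro j i hi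
      have hmem := hub _ (Or.inr ⟨j, i, hi, rfl⟩)
      rcases zdist_eq_half_imp hn ho _ _ hmem with h | h
      · right; linear_combination -h
      · left; exact h
    -- consecutive horizontal steps in a row are equal
    have rowconsec : ∀ (i : Fin n) (j : ℕ) (h2 : j + 2 < n),
        L i ⟨j + 1, by omega⟩ - L i ⟨j, by omega⟩ =
        L i ⟨j + 2, h2⟩ - L i ⟨j + 1, by omega⟩ := by
      intro i j h2
      have hinj := hL.1 i
      rcases H i j (by omega) with h1 | h1 <;> rcases H i (j + 1) (by omega) with hh | hh
      · rw [h1, hh]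
      · exfalso
        have h0 : L i ⟨j + 2, h2⟩ = L i ⟨j, by omega⟩ := by linear_combination h1 + hh
        have : j + 2 = j := congrArg Fin.val (hinj h0)
        omega
      · exfalso
        have h0 : L i ⟨j + 2, h2⟩ = L i ⟨j, by omega⟩ := by linear_combination h1 + hh
        have : j + 2 = j := congrArg Fin.val (hinj h0)
        omega
      · rw [h1, hh]
    have colconsec : ∀ (j : Fin n) (i : ℕ) (h2 : i + 2 < n),
        L ⟨i + 1, by omega⟩ j - L ⟨i, by omega⟩ j =
        L ⟨i + 2, h2⟩ j - L ⟨i + 1, by omega⟩ j := by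
      intro j i h2
      have hinj := hL.2 j
      rcases V j i (by omega) with h1 | h1 <;> rcases V j (i + 1) (by omega) with hh | hh
      · rw [h1, hh]
      · exfalso
        have h0 : L ⟨i + 2, h2⟩ j = L ⟨i, by omega⟩ j := by linear_combination h1 + hh
        have : i + 2 = i := congrArg Fin.val (hinj h0)
        omega
      · exfalso
        have h0 : L ⟨i + 2, h2⟩ j = L ⟨i, by omega⟩ j := by linear_combination h1 + hh
        have : i + 2 = i := congrArg Fin.val (hinj h0)
        omega
      · rw [h1, hh]
    have rowstep : ∀ (i : Fin n) (j : ℕ) (hj : j + 1 < n),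
        L i ⟨j + 1, hj⟩ - L i ⟨j, by omega⟩ =
        L i ⟨1, by omega⟩ - L i ⟨0, by omega⟩ := by
      intro i j
      induction j with
      | zero => intro hj; rfl
      | succ j ih =>
        intro hj
        have h := rowconsec i j hj
        rw [← h]
        exact ih (by omega)
    have colstep : ∀ (j : Fin n) (i : ℕ) (hi : i + 1 < n),
        L ⟨i + 1, hi⟩ j - L ⟨i, by omega⟩ j =
        L ⟨1, by omega⟩ j - L ⟨0, by omega⟩ j := by
      intro j i
      induction i with
      | zero => intro hi; rfl
      | succ i ih =>
        intro hi
        have h := colconsec j i hi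
        rw [← h]
        exact ih (by omega)
    have rowlin : ∀ (i : Fin n) (j : ℕ) (hj : j < n),
        L i ⟨j, hj⟩ = L i ⟨0, by omega⟩ +
          (L i ⟨1, by omega⟩ - L i ⟨0, by omega⟩) * (j : ZMod n) := by
      intro i j
      induction j with
      | zero => intro hj; simp
      | succ j ih =>
        intro hj
        have h1 := rowstep i j hj
        have h2 := ih (by omega)
        push_cast
        linear_combination h1 + h2
    have collin : ∀ (j : Fin n) (i : ℕ) (hi : i < n),
        L ⟨i, hi⟩ j = L ⟨0, by omega⟩ j +
          (L ⟨1, by omega⟩ j - L ⟨0, by omega⟩ j) * (i : ZMod n) := by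
      intro j i
      induction i with
      | zero => intro hi; simp
      | succ i ih =>
        intro hi
        have h1 := colstep j i hi
        have h2 := ih (by omega)
        push_cast
        linear_combination h1 + h2
    -- cross relations
    have hcc : ∀ (i : ℕ) (hi : i + 1 < n),
        (L ⟨i + 1, hi⟩ ⟨1, by omega⟩ - L ⟨i + 1, hi⟩ ⟨0, by omega⟩) -
          (L ⟨i, by omega⟩ ⟨1, by omega⟩ - L ⟨i, by omega⟩ ⟨0, by omega⟩) =
        (L ⟨1, by omega⟩ ⟨1, by omega⟩ - L ⟨0, by omega⟩ ⟨1, by omega⟩) -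
          (L ⟨1, by omega⟩ ⟨0, by omega⟩ - L ⟨0, by omega⟩ ⟨0, by omega⟩) := by
      intro i hi
      have h1 := colstep ⟨1, by omega⟩ i hi
      have h0 := colstep ⟨0, by omega⟩ i hi
      linear_combination h1 - h0
    have hrr : ∀ (j : ℕ) (hj : j + 1 < n),
        (L ⟨1, by omega⟩ ⟨j + 1, hj⟩ - L ⟨0, by omega⟩ ⟨j + 1, hj⟩) -
          (L ⟨1, by omega⟩ ⟨j, by omega⟩ - L ⟨0, by omega⟩ ⟨j, by omega⟩) =
        (L ⟨1, by omega⟩ ⟨1, by omega⟩ - L ⟨1, by omega⟩ ⟨0, by omega⟩) -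
          (L ⟨0, by omega⟩ ⟨1, by omega⟩ - L ⟨0, by omega⟩ ⟨0, by omega⟩) := by
      intro j hj
      have h1 := rowstep ⟨1, by omega⟩ j hj
      have h0 := rowstep ⟨0, by omega⟩ j hj
      linear_combination h1 - h0
    -- α = cfun 1 - cfun 0 is zero
    have e1 := hrr 0 (by omega)
    have e2 := hrr 1 (by omega)
    have hα0 :
        (L ⟨1, by omega⟩ ⟨1, by omega⟩ - L ⟨1, by omega⟩ ⟨0, by omega⟩) -
          (L ⟨0, by omega⟩ ⟨1, by omega⟩ - L ⟨0, by omega⟩ ⟨0, by omega⟩) = 0 ∨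
        (((L ⟨1, by omega⟩ ⟨1, by omega⟩ - L ⟨1, by omega⟩ ⟨0, by omega⟩) -
          (L ⟨0, by omega⟩ ⟨1, by omega⟩ - L ⟨0, by omega⟩ ⟨0, by omega⟩)) +
         ((L ⟨1, by omega⟩ ⟨1, by omega⟩ - L ⟨1, by omega⟩ ⟨0, by omega⟩) -
          (L ⟨0, by omega⟩ ⟨1, by omega⟩ - L ⟨0, by omega⟩ ⟨0, by omega⟩))) = 0 := by
      rcases V ⟨0, by omega⟩ 0 (by omega) with h0 | h0 <;>
        rcases V ⟨1, by omega⟩ 0 (by omega) with h1 | h1 <;>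
          rcases V ⟨2, by omega⟩ 0 (by omega) with h2 | h2 <;>
        first
        | (left; linear_combination h1 - h0 - e1)
        | (left; linear_combination h2 - h1 - e2)
        | (right; linear_combination h2 - h0 - e1 - e2)
    have hα :
        (L ⟨1, by omega⟩ ⟨1, by omega⟩ - L ⟨1, by omega⟩ ⟨0, by omega⟩) -
          (L ⟨0, by omega⟩ ⟨1, by omega⟩ - L ⟨0, by omega⟩ ⟨0, by omega⟩) = 0 := by
      rcases hα0 with h | h
      · exact h
      · have hu : IsUnit ((2 : ℕ) : ZMod n) :=
          (ZMod.isUnit_iff_coprime 2 n).mpr (Nat.coprime_two_left.mpr ho)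
        exact hu.mul_left_cancel (by push_cast; linear_combination h)
    have hcconst : ∀ (i : ℕ) (hi : i < n),
        L ⟨i, hi⟩ ⟨1, by omega⟩ - L ⟨i, hi⟩ ⟨0, by omega⟩ =
        L ⟨0, by omega⟩ ⟨1, by omega⟩ - L ⟨0, by omega⟩ ⟨0, by omega⟩ := by
      intro i
      induction i with
      | zero => intro hi; rfl
      | succ i ih =>
        intro hi
        have h := hcc i hi
        have h2 := ih (by omega)
        linear_combination h + h2 + e1 + hα
    refine ⟨L ⟨0, by omega⟩ ⟨0, by omega⟩,
      L ⟨1, by omega⟩ ⟨0, by omega⟩ - L ⟨0, by omega⟩ ⟨0, by omega⟩,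
      L ⟨0, by omega⟩ ⟨1, by omega⟩ - L ⟨0, by omega⟩ ⟨0, by omega⟩, ?_, ?_, ?_⟩
    · rcases V ⟨0, by omega⟩ 0 (by omega) with h | h
      · left; exact h
      · right; rw [hneg]; exact h
    · rcases H ⟨0, by omega⟩ 0 (by omega) with h | h
      · left; exact h
      · right; rw [hneg]; exact h
    · intro i j
      have h1 := rowlin i j.val j.isLt
      have h2 := collin ⟨0, by omega⟩ i.val i.isLt
      have h3 := hcconst i.val i.isLt
      have hie : (⟨i.val, i.isLt⟩ : Fin n) = i := rfl
      have hje : (⟨j.val, j.isLt⟩ : Fin n) = j := rfl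
      rw [hje] at h1
      rw [hie] at h2 h3
      linear_combination h1 + h2 + ((j : ℕ) : ZMod n) * h3
  · rintro ⟨s, r, c, hr, hc, hf⟩
    rw [hneg] at hr hc
    have key : ∀ (a e : ZMod n),
        (e = ((k : ℕ) : ZMod n) ∨ e = -((k : ℕ) : ZMod n)) →
        zdist a (a + e) = k := by
      intro a e he
      rcases he with rfl | rfl
      · exact zdist_add_half hn ho a
      · have h := zdist_add_half hn ho (a + -((k : ℕ) : ZMod n))
        rw [zdist_comm]
        convert h using 2
        ring
    have hall : ∀ d ∈ { d : ℕ |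
        (∃ i : Fin n, ∃ j : ℕ, ∃ hj : j + 1 < n,
          d = zdist (L i ⟨j, Nat.lt_of_succ_lt hj⟩) (L i ⟨j + 1, hj⟩)) ∨
        (∃ j : Fin n, ∃ i : ℕ, ∃ hi : i + 1 < n,
          d = zdist (L ⟨i, Nat.lt_of_succ_lt hi⟩ j) (L ⟨i + 1, hi⟩ j)) }, d = k := by
      rintro d (⟨i, j, hj, rfl⟩ | ⟨j, i, hi, rfl⟩)
      · have hd : L i ⟨j + 1, hj⟩ = L i ⟨j, Nat.lt_of_succ_lt hj⟩ + c := by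
          rw [hf, hf]
          push_cast [Fin.val_mk]
          ring
        rw [hd]
        exact key _ _ hc
      · have hd : L ⟨i + 1, hi⟩ j = L ⟨i, Nat.lt_of_succ_lt hi⟩ j + r := by
          rw [hf, hf]
          push_cast [Fin.val_mk]
          ring
        rw [hd]
        exact key _ _ hr
    have hmem : zdist (L ⟨0, by omega⟩ ⟨0, by omega⟩) (L ⟨0, by omega⟩ ⟨1, by omega⟩) ∈
        { d : ℕ |
        (∃ i : Fin n, ∃ j : ℕ, ∃ hj : j + 1 < n,
          d = zdist (L i ⟨j, Nat.lt_of_succ_lt hj⟩) (L i ⟨j + 1, hj⟩)) ∨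
        (∃ j : Fin n, ∃ i : ℕ, ∃ hi : i + 1 < n,
          d = zdist (L ⟨i, Nat.lt_of_succ_lt hi⟩ j) (L ⟨i + 1, hi⟩ j)) } :=
      Or.inl ⟨⟨0, by omega⟩, 0, by omega, rfl⟩
    have hk0 := hall _ hmem
    rw [hk0] at hmem
    exact le_antisymm (Nat.sInf_le hmem)
      (le_csInf ⟨k, hmem⟩ fun d hd => le_of_eq (hall d hd).symm)
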